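/- Let V be a finite-dimensional vector space over ℚ and let A, B ≥ 0 be integers with A ≠ B. Then the space of GL(V)-invariants of V^{⊗A} ⊗ (V*)^{⊗B} (under the diagonal action) is zero. -/

import Mathlib

open TensorProduct

/-- The diagonal action of an invertible endomorphism `g` of `V` on
`V^{⊗A} ⊗ (V^*)^{⊗B}`: `g` acts on every factor `V` in the standard way and on every
factor `V^*` by the contragredient (dual of `g⁻¹`) action. -/
noncomputable def glAction (V : Type) [AddCommGroup V] [Module ℚ V] (A B : ℕ)
    (g : (V →ₗ[ℚ] V)ˣ) :
    (PiTensorProduct ℚ (fun _ : Fin A => V)) ⊗[ℚ]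
      (PiTensorProduct ℚ (fun _ : Fin B => Module.Dual ℚ V)) →ₗ[ℚ]
    (PiTensorProduct ℚ (fun _ : Fin A => V)) ⊗[ℚ]
      (PiTensorProduct ℚ (fun _ : Fin B => Module.Dual ℚ V)) :=
  TensorProduct.map
    (PiTensorProduct.map fun _ => (g : V →ₗ[ℚ] V))
    (PiTensorProduct.map fun _ => LinearMap.dualMap ((g⁻¹ : (V →ₗ[ℚ] V)ˣ) : V →ₗ[ℚ] V))

lemma piMap_smul_id (W : Type) [AddCommGroup W] [Module ℚ W] (n : ℕ) (c : ℚ) :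
    PiTensorProduct.map (fun _ : Fin n => (c • LinearMap.id : W →ₗ[ℚ] W)) =
      c ^ n • LinearMap.id := by
  ext f
  simp [PiTensorProduct.map_tprod, MultilinearMap.map_smul_univ]

/-- for a finite-dimensional `ℚ`-vector space `V` and `A ≠ B`, the space of
`GL(V)`-invariants of `V^{⊗A} ⊗ (V^*)^{⊗B}` is zero. -/
theorem stmt_3 (V : Type) [AddCommGroup V] [Module ℚ V] [FiniteDimensional ℚ V]
    (A B : ℕ) (hAB : A ≠ B)
    (x : (PiTensorProduct ℚ (fun _ : Fin A => V)) ⊗[ℚ]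
      (PiTensorProduct ℚ (fun _ : Fin B => Module.Dual ℚ V)))
    (hx : ∀ g : (V →ₗ[ℚ] V)ˣ, glAction V A B g x = x) :
    x = 0 := by
  set g : (V →ₗ[ℚ] V)ˣ :=
    { val := (2 : ℚ) • LinearMap.id
      inv := (2 : ℚ)⁻¹ • LinearMap.id
      val_inv := by ext v; simp [smul_smul]
      inv_val := by ext v; simp [smul_smul] } with hg
  have hinv : ((g⁻¹ : (V →ₗ[ℚ] V)ˣ) : V →ₗ[ℚ] V) = (2 : ℚ)⁻¹ • LinearMap.id := rfl
  have hdual : LinearMap.dualMap ((g⁻¹ : (V →ₗ[ℚ] V)ˣ) : V →ₗ[ℚ] V) =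
      ((2 : ℚ)⁻¹ • LinearMap.id : Module.Dual ℚ V →ₗ[ℚ] Module.Dual ℚ V) := by
    rw [hinv]; ext φ v; simp
  have key : glAction V A B g x = ((2 : ℚ) ^ A * ((2 : ℚ)⁻¹) ^ B) • x := by
    have hval : ((g : V →ₗ[ℚ] V)) = (2 : ℚ) • LinearMap.id := rfl
    rw [glAction, hval, hdual, piMap_smul_id, piMap_smul_id]
    rw [TensorProduct.map_smul_left, TensorProduct.map_smul_right, TensorProduct.map_id]
    simp [smul_smul]
  have h1 := hx g
  rw [key] at h1
  have hc : (2 : ℚ) ^ A * ((2 : ℚ)⁻¹) ^ B ≠ 1 := by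
    intro h
    rw [inv_pow] at h
    field_simp at h
    exact hAB (Nat.pow_right_injective (le_refl 2) (show (2:ℕ)^A = 2^B by exact_mod_cast h))
  have hz : ((2 : ℚ) ^ A * ((2 : ℚ)⁻¹) ^ B - 1) • x = 0 := by
    rw [sub_smul ((2:ℚ)^A * ((2:ℚ)⁻¹)^B) 1 x, one_smul, h1, sub_self]
  rcases smul_eq_zero.mp hz with h | h
  · exact absurd (sub_eq_zero.mp h) hc
  · exact h
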